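/- For I ⊆ [0,1], the set I satisfies the DCC if and only if D(I) satisfies the DCC, where D(I) = { (m-1+f)/m ≤ 1 : m a positive integer, f ∈ I_+ } and I_+ = {0} ∪ {finite sums of elements of I lying in [0,1]}. -/

import Mathlib

open Pointwise

/-- A set `S` satisfies the DCC if it contains no infinite strictly decreasing
sequence. -/
def HasDCC (S : Set ℝ) : Prop := ¬ ∃ f : ℕ → ℝ, (∀ n, f n ∈ S) ∧ StrictAnti f

/-- `I_+` is `{0}` together with all finite sums of elements of `I`
lying in `[0,1]`. -/
def Iplus (I : Set ℝ) : Set ℝ :=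
  {0} ∪ { j : ℝ | j ∈ Set.Icc (0:ℝ) 1 ∧
    ∃ l : List ℝ, l ≠ [] ∧ (∀ x ∈ l, x ∈ I) ∧ l.sum = j }

/-- `D(I) = { a ≤ 1 : a = (m-1+f)/m, m ∈ ℕ_{≥1}, f ∈ I_+ }`. -/
def DSet (I : Set ℝ) : Set ℝ :=
  { a : ℝ | a ≤ 1 ∧ ∃ m : ℕ, 1 ≤ m ∧ ∃ f ∈ Iplus I, a = ((m : ℝ) - 1 + f) / m }

lemma hasDCC_iff_isWF (S : Set ℝ) : HasDCC S ↔ S.IsWF := by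
  rw [Set.isWF_iff_no_descending_seq]
  constructor
  · intro h f hf hmem; exact h ⟨f, hmem, hf⟩
  · rintro h ⟨f, hmem, hf⟩; exact h f hf hmem

lemma Iplus_nonneg {I : Set ℝ} {f : ℝ} (hf : f ∈ Iplus I) : 0 ≤ f := by
  rcases hf with h | h
  · rw [Set.mem_singleton_iff] at h; rw [h]
  · exact h.1.1

/-- iterated sumsets -/
def Cset (I : Set ℝ) : ℕ → Set ℝ
  | 0 => {0}
  | n + 1 => Cset I n ∪ (Cset I n + I)

lemma cset_isWF {I : Set ℝ} (hI : I.IsWF) : ∀ n, (Cset I n).IsWF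
  | 0 => Set.isWF_singleton
  | n + 1 => (cset_isWF hI n).union ((cset_isWF hI n).add hI)

lemma zero_mem_cset (I : Set ℝ) : ∀ n, (0:ℝ) ∈ Cset I n
  | 0 => rfl
  | n + 1 => Or.inl (zero_mem_cset I n)

lemma sum_mem_cset {I : Set ℝ} (hI : I ⊆ Set.Icc 0 1) :
    ∀ (l : List ℝ) (n : ℕ), (∀ x ∈ l, x ∈ I) →
      l.countP (fun x => decide (0 < x)) ≤ n → l.sum ∈ Cset I n := by
  intro l
  induction l with
  | nil => intro n _ _; simpa using zero_mem_cset I n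
  | cons x t ih =>
    intro n hmem hcount
    have hx : x ∈ I := hmem x (by simp)
    have hx0 : 0 ≤ x := (hI hx).1
    rw [List.countP_cons] at hcount
    rcases eq_or_lt_of_le hx0 with h0 | hpos
    · have hd : decide (0 < x) = false := by simp [← h0]
      rw [hd] at hcount
      simp only [Bool.false_eq_true, if_false, Nat.add_zero] at hcount
      have hsum : (x :: t).sum = t.sum := by simp [← h0]
      rw [hsum]
      exact ih n (fun y hy => hmem y (List.mem_cons_of_mem x hy)) hcount
    · have hd : decide (0 < x) = true := decide_eq_true hpos
      rw [hd] at hcount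
      simp at hcount
      obtain ⟨m, rfl⟩ : ∃ m, n = m + 1 := ⟨n - 1, by omega⟩
      have ht : t.sum ∈ Cset I m :=
        ih m (fun y hy => hmem y (List.mem_cons_of_mem x hy)) (by omega)
      have hs : (x :: t).sum = t.sum + x := by rw [List.sum_cons]; ring
      rw [hs]
      exact Or.inr (Set.add_mem_add ht hx)

lemma count_mul_le_sum {I : Set ℝ} (hI : I ⊆ Set.Icc 0 1) {ε : ℝ}
    (hmin : ∀ x ∈ I, 0 < x → ε ≤ x) :
    ∀ l : List ℝ, (∀ x ∈ l, x ∈ I) →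
      ε * (l.countP (fun x => decide (0 < x)) : ℝ) ≤ l.sum := by
  intro l
  induction l with
  | nil => simp
  | cons x t ih =>
    intro hmem
    have hx : x ∈ I := hmem x (by simp)
    have hx0 : 0 ≤ x := (hI hx).1
    have iht : ε * (t.countP (fun x => decide (0 < x)) : ℝ) ≤ t.sum :=
      ih (fun y hy => hmem y (List.mem_cons_of_mem x hy))
    rw [List.countP_cons, List.sum_cons]
    rcases eq_or_lt_of_le hx0 with h0 | hpos
    · have hd : decide (0 < x) = false := by simp [← h0]
      rw [hd]
      simp only [Bool.false_eq_true, if_false, Nat.add_zero]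
      linarith
    · have hd : decide (0 < x) = true := decide_eq_true hpos
      have hεx : ε ≤ x := hmin x hx hpos
      rw [hd]
      simp only [if_pos rfl]
      push_cast
      nlinarith

lemma iplus_isWF {I : Set ℝ} (hI : I ⊆ Set.Icc 0 1) (hwf : I.IsWF) :
    (Iplus I).IsWF := by
  by_cases hJ : (I ∩ {x | 0 < x}).Nonempty
  · have hJwf : (I ∩ {x | 0 < x}).IsWF := hwf.mono Set.inter_subset_left
    set ε := hJwf.min hJ with hε
    have hεmem := hJwf.min_mem hJ
    have hεpos : 0 < ε := hεmem.2
    have hmin : ∀ x ∈ I, 0 < x → ε ≤ x := fun x hx hx0 => hJwf.min_le hJ ⟨hx, hx0⟩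
    set N := ⌈ε⁻¹⌉₊ with hN
    have hsub : Iplus I ⊆ Cset I N := by
      rintro j (hj | ⟨⟨_, hj1⟩, l, _, hl, rfl⟩)
      · rw [Set.mem_singleton_iff] at hj; rw [hj]; exact zero_mem_cset I N
      · apply sum_mem_cset hI l N hl
        have h1 : ε * (l.countP (fun x => decide (0 < x)) : ℝ) ≤ 1 :=
          le_trans (count_mul_le_sum hI hmin l hl) hj1
        have h2 : (1:ℝ) ≤ ε * N := by
          have hle := Nat.le_ceil ε⁻¹
          calc (1:ℝ) = ε * ε⁻¹ := by field_simp
          _ ≤ ε * N := by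
            apply mul_le_mul_of_nonneg_left _ hεpos.le
            exact_mod_cast hle
        have h3 : (l.countP (fun x => decide (0 < x)) : ℝ) ≤ (N : ℝ) :=
          le_of_mul_le_mul_left (le_trans h1 h2) hεpos
        exact_mod_cast h3
    exact (cset_isWF hwf N).mono hsub
  · have hJ' : ∀ x ∈ I, ¬ 0 < x := fun x hx hx0 => hJ ⟨x, hx, hx0⟩
    have hsub : Iplus I ⊆ {0} := by
      rintro j (hj | ⟨_, l, _, hl, rfl⟩)
      · exact hj
      · have hz : ∀ x ∈ l, x = 0 := fun x hx =>
          le_antisymm (not_lt.mp (hJ' x (hl x hx))) (hI (hl x hx)).1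
        simpa using List.sum_eq_zero hz
    exact Set.isWF_singleton.mono hsub

lemma exists_strictMono_subset {S : Set ℕ} (hS : S.Infinite) :
    ∃ φ : ℕ → ℕ, StrictMono φ ∧ ∀ n, φ n ∈ S := by
  choose g hgmem hggt using hS.exists_gt
  refine ⟨fun n => g^[n+1] 0, strictMono_nat_of_lt_succ fun n => ?_, fun n => ?_⟩
  · show g^[n+1] 0 < g^[n+1+1] 0
    rw [Function.iterate_succ_apply' g (n+1)]
    exact hggt _
  · show g^[n+1] 0 ∈ S
    rw [Function.iterate_succ_apply' g n]
    exact hgmem _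

/-- For `I ⊆ [0,1]`, the set `I` satisfies the DCC iff `D(I)` satisfies the DCC. -/
theorem dcc_iff_DSet_dcc (I : Set ℝ) (hI : I ⊆ Set.Icc 0 1) :
    HasDCC I ↔ HasDCC (DSet I) := by
  constructor
  · intro hIdcc
    have hP : (Iplus I).IsWF := iplus_isWF hI ((hasDCC_iff_isWF I).1 hIdcc)
    have hPdcc : HasDCC (Iplus I) := (hasDCC_iff_isWF _).2 hP
    rintro ⟨a, hmem, hanti⟩
    have hch : ∀ n : ℕ, ∃ m : ℕ, 1 ≤ m ∧ ∃ g ∈ Iplus I,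
        a (n+1) = ((m:ℝ) - 1 + g) / m := fun n => (hmem (n+1)).2
    choose m hm g hg heq using hch
    have hc1 : a 1 < 1 := lt_of_lt_of_le (hanti Nat.zero_lt_one) (hmem 0).1
    have hpos : (0:ℝ) < 1 - a 1 := by linarith
    have hkey : ∀ n, (m n : ℝ) * a (n+1) = (m n : ℝ) - 1 + g n := by
      intro n
      have hmpos : (0:ℝ) < m n := by exact_mod_cast hm n
      rw [heq n]; field_simp
    have hmc : ∀ n, (m n : ℝ) * (1 - a 1) ≤ 1 := by
      intro n
      have h1 : a (n+1) ≤ a 1 := hanti.antitone (Nat.succ_le_succ (Nat.zero_le n))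
      have h2 : 0 ≤ g n := Iplus_nonneg (hg n)
      have hmpos : (0:ℝ) < m n := by exact_mod_cast hm n
      nlinarith [hkey n, mul_le_mul_of_nonneg_left h1 hmpos.le]
    set M := ⌈(1 - a 1)⁻¹⌉₊ with hM
    have hmM : ∀ n, m n ≤ M := by
      intro n
      have h1 : (m n : ℝ) ≤ 1 / (1 - a 1) := (le_div_iff₀ hpos).mpr (hmc n)
      rw [one_div] at h1
      have h2 : (m n : ℝ) ≤ (M : ℝ) := le_trans h1 (Nat.le_ceil _)
      exact_mod_cast h2
    have hfib : ∃ k, {n : ℕ | m n = k}.Infinite := by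
      by_contra hno
      push_neg at hno
      try simp only [Set.not_infinite] at hno
      have hcov : (Set.univ : Set ℕ) ⊆ ⋃ k ∈ Finset.range (M+1), {n | m n = k} := by
        intro n _
        simp only [Set.mem_iUnion, Set.mem_setOf_eq, Finset.mem_range]
        exact ⟨m n, Nat.lt_succ_of_le (hmM n), rfl⟩
      exact Set.infinite_univ
        (((Finset.range (M+1)).finite_toSet.biUnion (fun k _ => hno k)).subset hcov)
    obtain ⟨k, hk⟩ := hfib
    obtain ⟨φ, hφmono, hφmem⟩ := exists_strictMono_subset hk
    have hφk : ∀ n, m (φ n) = k := fun n => hφmem n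
    have hk1 : 1 ≤ k := hφk 0 ▸ hm (φ 0)
    have hk0 : (0:ℝ) < k := by exact_mod_cast hk1
    have hgval : ∀ n, g (φ n) = (k:ℝ) * a (φ n + 1) - ((k:ℝ) - 1) := by
      intro n
      have h := hkey (φ n)
      rw [hφk n] at h
      linarith
    refine hPdcc ⟨fun n => g (φ n), fun n => hg (φ n), ?_⟩
    intro p q hpq
    have haq : a (φ q + 1) < a (φ p + 1) :=
      hanti (Nat.succ_lt_succ (hφmono hpq))
    simp only [hgval]
    nlinarith
  · intro hD
    rintro ⟨f, hmem, hanti⟩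
    refine hD ⟨f, fun n => ?_, hanti⟩
    have hx := hI (hmem n)
    refine ⟨hx.2, 1, le_refl 1, f n, Or.inr ⟨hx, [f n], by simp,
      fun x hxm => by rw [List.mem_singleton.mp hxm]; exact hmem n, by simp⟩,
      by norm_num⟩
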